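/- Let K be a Euclidean cubical complex in ℝⁿ, let w be a vertex of K, and let L = R(K, w) be the reachable complex from w. If v is a vertex of L such that the geometric realization of pastlk(L, v) has at least two connected components, then the dipath space P(K, w, v) has at least two connected components (in particular it is disconnected). -/

import Mathlib

open Set

namespace DCC

/-- The real point corresponding to an integer point of `ℤⁿ`. -/
def toR {n : ℕ} (v : Fin n → ℤ) : Fin n → ℝ := fun i => (v i : ℝ)

/-- `j ∈ {0,1}ⁿ`: every coordinate of `j` is `0` or `1`. -/
def IsBinary {n : ℕ} (j : Fin n → ℤ) : Prop := ∀ i, j i = 0 ∨ j i = 1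

/-- The elementary cube `[v - j, v] = {x : v - j ⪯ x ⪯ v}` in `ℝⁿ`. -/
def cube {n : ℕ} (v j : Fin n → ℤ) : Set (Fin n → ℝ) := Set.Icc (toR (v - j)) (toR v)

/-- A subset of `ℝⁿ` which is an elementary cube. -/
def IsElemCube {n : ℕ} (σ : Set (Fin n → ℝ)) : Prop := ∃ v j, IsBinary j ∧ σ = cube v j

/-- A Euclidean cubical complex: a finite union of elementary cubes. -/
def IsComplex {n : ℕ} (K : Set (Fin n → ℝ)) : Prop :=
  ∃ C : Finset ((Fin n → ℤ) × (Fin n → ℤ)),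
    (∀ c ∈ C, IsBinary c.2) ∧ K = ⋃ c ∈ C, cube c.1 c.2

/-- The past link of `v` in `K`: all nonzero binary `j` with `[v - j, v] ⊆ K`. -/
def pastlk {n : ℕ} (K : Set (Fin n → ℝ)) (v : Fin n → ℤ) : Set (Fin n → ℤ) :=
  {j | IsBinary j ∧ j ≠ 0 ∧ cube v j ⊆ K}

/-- A maximal cube of `K`: a cube of `K` not properly contained in another cube of `K`. -/
def IsMaximalCube {n : ℕ} (K σ : Set (Fin n → ℝ)) : Prop :=
  IsElemCube σ ∧ σ ⊆ K ∧ ∀ γ, IsElemCube γ → γ ⊆ K → σ ⊆ γ → γ = σ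

/-- `τ` is a free face of the maximal cube `σ` in `K`: `τ` is a proper face of `σ` and
`σ` is the unique maximal cube of `K` containing `τ`. -/
def IsFreeFace {n : ℕ} (K τ σ : Set (Fin n → ℝ)) : Prop :=
  IsElemCube τ ∧ τ ⊂ σ ∧ IsMaximalCube K σ ∧
    ∀ γ, IsMaximalCube K γ → τ ⊆ γ → γ = σ

/-- The `(τ, σ)`-collapse of `K`: the union of all cubes of `K` that do not contain `τ`. -/
def collapse {n : ℕ} (K τ : Set (Fin n → ℝ)) : Set (Fin n → ℝ) :=
  ⋃₀ {γ | IsElemCube γ ∧ γ ⊆ K ∧ ¬ τ ⊆ γ}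

/-- The restriction `K|_σ` where `σ` has minimum vertex `a` and maximum vertex `b`:
the union of all cubes `γ` of `K` with `a ⪯ min γ` and `max γ ⪯ b`. -/
def restrict {n : ℕ} (K : Set (Fin n → ℝ)) (a b : Fin n → ℤ) : Set (Fin n → ℝ) :=
  ⋃₀ {γ | ∃ v j, IsBinary j ∧ γ = cube v j ∧ cube v j ⊆ K ∧ a ≤ v - j ∧ v ≤ b}

/-- The geometric realization of the past link of `v` in `K`, as a subset of `ℝⁿ`:
the union over `j ∈ pastlk K v` of the convex hulls of `{v - eᵢ : jᵢ = 1}`. -/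
def geomReal {n : ℕ} (K : Set (Fin n → ℝ)) (v : Fin n → ℤ) : Set (Fin n → ℝ) :=
  ⋃ j ∈ pastlk K v, convexHull ℝ ((fun i => toR v - Pi.single i (1 : ℝ)) '' {i | j i = 1})

/-- The space of dipaths in `K` from `p` to `q`, as a subspace of
`C([0,1], ℝⁿ)` with the compact-open topology. -/
def DipathSpace {n : ℕ} (K : Set (Fin n → ℝ)) (p q : Fin n → ℝ) :
    Set C(unitInterval, Fin n → ℝ) :=
  {γ | (∀ t, γ t ∈ K) ∧ γ 0 = p ∧ γ 1 = q ∧ Monotone ⇑γ}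

/-- The reachable complex `R(K, p)`: points of `K` reachable from `p` by a dipath in `K`. -/
def reach {n : ℕ} (K : Set (Fin n → ℝ)) (p : Fin n → ℝ) : Set (Fin n → ℝ) :=
  {q ∈ K | (DipathSpace K p q).Nonempty}

/-- `(τ, σ)` is an LPDC pair in `K` (where `K'` is the `(τ,σ)`-collapse of `K`):
for every vertex `v` of `K'`, the geometric realizations of the past links of `v`
in `K` and in `K'` are homotopy equivalent. -/
def IsLPDCPair {n : ℕ} (K τ : Set (Fin n → ℝ)) : Prop :=
  ∀ v : Fin n → ℤ, toR v ∈ collapse K τ →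
    Nonempty (ContinuousMap.HomotopyEquiv ↥(geomReal K v) ↥(geomReal (collapse K τ) v))



/-! ### Auxiliary material -/

section Aux

set_option maxHeartbeats 1000000

variable {n : ℕ}

lemma mem_cube_iff {v j : Fin n → ℤ} {p : Fin n → ℝ} :
    p ∈ cube v j ↔ ∀ i, (v i : ℝ) - (j i : ℝ) ≤ p i ∧ p i ≤ (v i : ℝ) := by
  simp only [cube, Set.mem_Icc, Pi.le_def, toR, Pi.sub_apply, Int.cast_sub, forall_and]

lemma exists_cube {K : Set (Fin n → ℝ)} (hK : IsComplex K) {p : Fin n → ℝ} (hp : p ∈ K) :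
    ∃ u j', IsBinary j' ∧ p ∈ cube u j' ∧ cube u j' ⊆ K := by
  obtain ⟨C, hC, rfl⟩ := hK
  simp only [Set.mem_iUnion] at hp
  obtain ⟨c, hc, hpc⟩ := hp
  exact ⟨c.1, c.2, hC c hc, hpc, fun y hy => Set.mem_iUnion₂.mpr ⟨c, hc, hy⟩⟩

/-- Extension of a path on the unit interval to all of `ℝ`. -/
noncomputable def F (γ : C(unitInterval, Fin n → ℝ)) (r : ℝ) : Fin n → ℝ :=
  γ (Set.projIcc 0 1 zero_le_one r)

/-- The "distance below `v`" function of a path. -/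
noncomputable def sfun (v : Fin n → ℤ) (γ : C(unitInterval, Fin n → ℝ)) (r : ℝ) : ℝ :=
  ∑ i, ((v i : ℝ) - F γ r i)

open Classical in
/-- The point where a dipath to `v` crosses the level set `sfun = 1`. -/
noncomputable def Phi (v : Fin n → ℤ) (γ : C(unitInterval, Fin n → ℝ)) : Fin n → ℝ :=
  if h : ∃ r ∈ Set.Icc (0:ℝ) 1, sfun v γ r = 1 then F γ h.choose else 0

lemma F_continuous (γ : C(unitInterval, Fin n → ℝ)) : Continuous (F γ) :=
  γ.continuous.comp continuous_projIcc

lemma F_monotone {γ : C(unitInterval, Fin n → ℝ)} (hm : Monotone ⇑γ) : Monotone (F γ) :=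
  hm.comp (Set.monotone_projIcc zero_le_one)

lemma F_of_mem (γ : C(unitInterval, Fin n → ℝ)) {r : ℝ} (hr : r ∈ Set.Icc (0:ℝ) 1) :
    F γ r = γ ⟨r, hr⟩ := by
  rw [F, Set.projIcc_of_mem]

lemma F_zero (γ : C(unitInterval, Fin n → ℝ)) : F γ 0 = γ 0 := by
  rw [F_of_mem γ (by norm_num : (0:ℝ) ∈ Set.Icc (0:ℝ) 1)]; rfl

lemma F_one (γ : C(unitInterval, Fin n → ℝ)) : F γ 1 = γ 1 := by
  rw [F_of_mem γ (by norm_num : (1:ℝ) ∈ Set.Icc (0:ℝ) 1)]; rfl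

lemma sfun_continuous {v : Fin n → ℤ} {γ : C(unitInterval, Fin n → ℝ)} :
    Continuous (sfun v γ) :=
  continuous_finset_sum _ fun i _ =>
    continuous_const.sub ((continuous_apply i).comp (F_continuous γ))

lemma sfun_antitone {v : Fin n → ℤ} {γ : C(unitInterval, Fin n → ℝ)} (hm : Monotone ⇑γ) :
    Antitone (sfun v γ) := fun _ _ h =>
  Finset.sum_le_sum fun i _ => sub_le_sub_left (F_monotone hm h i) _

lemma sfun_one {v : Fin n → ℤ} {γ : C(unitInterval, Fin n → ℝ)} (h1 : γ 1 = toR v) :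
    sfun v γ 1 = 0 := by
  simp [sfun, F_one, h1, toR]

lemma sfun_zero {w v : Fin n → ℤ} {γ : C(unitInterval, Fin n → ℝ)} (h0 : γ 0 = toR w) :
    sfun v γ 0 = ∑ i, ((v i : ℝ) - (w i : ℝ)) := by
  simp [sfun, F_zero, h0, toR]

lemma F_eq_of_sfun_eq {v : Fin n → ℤ} {γ : C(unitInterval, Fin n → ℝ)} (hm : Monotone ⇑γ)
    {r r' : ℝ} (h : r ≤ r') (hs : sfun v γ r = sfun v γ r') : F γ r = F γ r' := by
  have hle : ∀ i ∈ Finset.univ, (v i : ℝ) - F γ r' i ≤ (v i : ℝ) - F γ r i :=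
    fun i _ => sub_le_sub_left (F_monotone hm h i) _
  have hkey := (Finset.sum_eq_sum_iff_of_le hle).mp (hs.symm : sfun v γ r' = sfun v γ r)
  funext i
  have := hkey i (Finset.mem_univ i)
  linarith

lemma Phi_eq {v : Fin n → ℤ} {γ : C(unitInterval, Fin n → ℝ)} (hm : Monotone ⇑γ)
    {r : ℝ} (hr : r ∈ Set.Icc (0:ℝ) 1) (h1 : sfun v γ r = 1) : Phi v γ = F γ r := by
  have hne : ∃ r ∈ Set.Icc (0:ℝ) 1, sfun v γ r = 1 := ⟨r, hr, h1⟩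
  rw [Phi]
  rw [dif_pos hne]
  obtain ⟨_, h1'⟩ := hne.choose_spec
  rcases le_total hne.choose r with h | h
  · exact F_eq_of_sfun_eq hm h (h1'.trans h1.symm)
  · exact (F_eq_of_sfun_eq hm h (h1.trans h1'.symm)).symm

lemma F_le_v {v : Fin n → ℤ} {γ : C(unitInterval, Fin n → ℝ)} (hm : Monotone ⇑γ)
    (h1 : γ 1 = toR v) (r : ℝ) : F γ r ≤ toR v := by
  rw [← h1]; exact hm (Set.projIcc 0 1 zero_le_one r).2.2

lemma w_le_F {w : Fin n → ℤ} {γ : C(unitInterval, Fin n → ℝ)} (hm : Monotone ⇑γ)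
    (h0 : γ 0 = toR w) (r : ℝ) : toR w ≤ F γ r := by
  rw [← h0]; exact hm (Set.projIcc 0 1 zero_le_one r).2.1

/-- The main structural lemma: the value of `Phi` on a dipath lies in the geometric
realization of the past link of `v` in the reachable complex. -/
lemma phi_mem {K : Set (Fin n → ℝ)} (hK : IsComplex K) {w v : Fin n → ℤ}
    {γ : C(unitInterval, Fin n → ℝ)} (hγ : γ ∈ DipathSpace K (toR w) (toR v))
    (hs0 : 1 ≤ sfun v γ 0) :
    Phi v γ ∈ geomReal (reach K (toR w)) v := by
  obtain ⟨hγK, hγ0, hγ1, hγm⟩ := hγ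
  have hs1 : sfun v γ 1 = 0 := sfun_one hγ1
  obtain ⟨t, ht, hts⟩ : ∃ t ∈ Set.Icc (0:ℝ) 1, sfun v γ t = 1 := by
    have h := intermediate_value_Icc' zero_le_one (sfun_continuous (v := v) (γ := γ)).continuousOn
    exact h ⟨by rw [hs1]; norm_num, hs0⟩
  have hPhi : Phi v γ = F γ t := Phi_eq hγm ht hts
  set x₀ := F γ t with hx₀def
  set c : Fin n → ℝ := fun i => (v i : ℝ) - x₀ i with hcdef
  have hcsum : ∑ i, c i = 1 := hts
  have hxlev : ∀ i, x₀ i ≤ (v i : ℝ) := fun i => F_le_v hγm hγ1 t i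
  have hwlex : ∀ i, (w i : ℝ) ≤ x₀ i := fun i => w_le_F hγm hγ0 t i
  have hc0 : ∀ i, 0 ≤ c i := fun i => sub_nonneg.mpr (hxlev i)
  have hc1 : ∀ i, c i ≤ 1 := by
    intro i
    have h := Finset.single_le_sum (f := c) (fun k _ => hc0 k) (Finset.mem_univ i)
    rw [hcsum] at h; exact h
  set j : Fin n → ℤ := fun i => if c i = 0 then 0 else 1 with hjdef
  have hjbin : IsBinary j := fun i => by by_cases h : c i = 0 <;> simp [hjdef, h]
  have hjne : j ≠ 0 := by
    intro h0
    have hall : ∀ i, c i = 0 := by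
      intro i
      by_contra hne
      have h1 : j i = 1 := by simp [hjdef, hne]
      rw [h0] at h1
      simp at h1
    rw [Finset.sum_congr rfl (fun i _ => hall i)] at hcsum
    simp at hcsum
  have hj0 : ∀ i, c i = 0 → (j i : ℝ) = 0 := fun i h => by simp [hjdef, h]
  have hj1 : ∀ i, c i ≠ 0 → (j i : ℝ) = 1 := fun i h => by simp [hjdef, h]
  have hx₀i : ∀ i, x₀ i = (v i : ℝ) - c i := fun i => by simp [hcdef]
  have hx₀cube : x₀ ∈ cube v j := by
    rw [mem_cube_iff]
    intro i
    by_cases h : c i = 0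
    · refine ⟨?_, hxlev i⟩
      have h' : x₀ i = (v i : ℝ) := by rw [hx₀i i, h]; ring
      rw [hj0 i h]
      linarith
    · refine ⟨?_, hxlev i⟩
      rw [hj1 i h]
      have h1 := hx₀i i
      have h2 := hc1 i
      linarith
  -- The elementary cube `[v - j, v]` is contained in `K`.
  have hcubeK : cube v j ⊆ K := by
    by_cases hbig : ∀ i, c i ≠ 0 → c i < 1
    · have hx₀K : x₀ ∈ K := hγK _
      obtain ⟨u, j', hj'bin, hxu, huK⟩ := exists_cube hK hx₀K
      intro p hp
      apply huK
      rw [mem_cube_iff] at hp hxu ⊢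
      intro i
      obtain ⟨hl, hr⟩ := hxu i
      obtain ⟨hpl, hpr⟩ := hp i
      by_cases h : c i = 0
      · have hpv : p i = (v i : ℝ) := le_antisymm hpr (by rw [hj0 i h] at hpl; linarith)
        have hxv : x₀ i = (v i : ℝ) := by rw [hx₀i i, h]; ring
        rw [hpv, ← hxv]
        exact ⟨hl, hr⟩
      · have hclt : c i < 1 := hbig i h
        have hcgt : 0 < c i := (hc0 i).lt_of_ne (Ne.symm h)
        have h1 : (u i : ℝ) - j' i ≤ (v i : ℝ) - 1 := by
          have hlt : (u i : ℝ) - j' i < v i := lt_of_le_of_lt hl (by rw [hx₀i i]; linarith)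
          have hlt' : u i - j' i < v i := by exact_mod_cast hlt
          have : u i - j' i ≤ v i - 1 := by omega
          exact_mod_cast this
        have h2 : (v i : ℝ) ≤ u i := by
          have hgt : (v i : ℝ) - 1 < u i := lt_of_lt_of_le (by rw [hx₀i i] at hr ⊢; linarith) hr
          have hgt' : v i - 1 < u i := by exact_mod_cast hgt
          have : v i ≤ u i := by omega
          exact_mod_cast this
        rw [hj1 i h] at hpl
        exact ⟨le_trans h1 (by linarith), le_trans hpr h2⟩
    · push_neg at hbig
      obtain ⟨i₀, hne0, hge1⟩ := hbig
      have hci₀ : c i₀ = 1 := le_antisymm (hc1 i₀) hge1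
      have hrest : ∀ k, k ≠ i₀ → c k = 0 := by
        intro k hk
        by_contra hkne
        have hkpos : 0 < c k := (hc0 k).lt_of_ne (Ne.symm hkne)
        have hsum2 : c i₀ + c k ≤ ∑ i, c i := by
          have := Finset.add_sum_erase Finset.univ c (Finset.mem_univ i₀)
          rw [← this]
          have hk' : k ∈ Finset.univ.erase i₀ := Finset.mem_erase.mpr ⟨hk, Finset.mem_univ k⟩
          have := Finset.single_le_sum (f := c)
            (fun m _ => hc0 m) hk'
          linarith
        rw [hcsum, hci₀] at hsum2
        linarith
      intro p hp
      rw [mem_cube_iff] at hp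
      have hcf : Continuous fun r => F γ r i₀ := (continuous_apply i₀).comp (F_continuous γ)
      have hF1 : F γ 1 i₀ = (v i₀ : ℝ) := by rw [F_one, hγ1]; rfl
      have hFt : F γ t i₀ = (v i₀ : ℝ) - 1 := by rw [← hx₀def, hx₀i i₀, hci₀]
      obtain ⟨r, hr, hrp⟩ : ∃ r ∈ Set.Icc t 1, F γ r i₀ = p i₀ := by
        have h := intermediate_value_Icc ht.2 hcf.continuousOn
        apply h
        rw [hFt, hF1]
        have hji : (j i₀ : ℝ) = 1 := hj1 i₀ hne0
        refine ⟨?_, (hp i₀).2⟩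
        have := (hp i₀).1
        rw [hji] at this
        exact this
      have hFp : F γ r = p := by
        funext k
        by_cases hk : k = i₀
        · rw [hk]; exact hrp
        · have h1 : F γ t k ≤ F γ r k := F_monotone hγm hr.1 k
          have h2 : F γ r k ≤ F γ 1 k := F_monotone hγm hr.2 k
          have hck : c k = 0 := hrest k hk
          have hFtk : F γ t k = (v k : ℝ) := by rw [← hx₀def, hx₀i k, hck]; ring
          have hF1k : F γ 1 k = (v k : ℝ) := by rw [F_one, hγ1]; rfl
          have hpk : p k = (v k : ℝ) := by
            have := hp k
            rw [hj0 k hck] at this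
            linarith [this.1, this.2]
          rw [hpk]
          rw [hFtk] at h1; rw [hF1k] at h2
          linarith
      rw [← hFp]
      exact hγK _
  -- Every point of the cube is reachable from `w`.
  have hwleq : ∀ q ∈ cube v j, toR w ≤ q := by
    intro q hq
    rw [mem_cube_iff] at hq
    intro i
    by_cases h : c i = 0
    · have hqv : (v i : ℝ) ≤ q i := by have := (hq i).1; rw [hj0 i h] at this; linarith
      calc toR w i = (w i : ℝ) := rfl
        _ ≤ x₀ i := hwlex i
        _ ≤ (v i : ℝ) := hxlev i
        _ ≤ q i := hqv
    · have hcgt : 0 < c i := (hc0 i).lt_of_ne (Ne.symm h)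
      have hwv : (w i : ℝ) < v i := lt_of_le_of_lt (hwlex i) (by rw [hx₀i i]; linarith)
      have hwv' : w i < v i := by exact_mod_cast hwv
      have hwv1 : (w i : ℝ) ≤ (v i : ℝ) - 1 := by
        have h' : w i ≤ v i - 1 := by omega
        exact_mod_cast h'
      have := (hq i).1
      rw [hj1 i h] at this
      calc toR w i = (w i : ℝ) := rfl
        _ ≤ (v i : ℝ) - 1 := hwv1
        _ ≤ q i := this
  have hqlev : ∀ q ∈ cube v j, q ≤ toR v := by
    intro q hq i
    rw [mem_cube_iff] at hq
    exact (hq i).2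
  have hcubeL : cube v j ⊆ reach K (toR w) := by
    intro q hq
    refine ⟨hcubeK hq, ?_⟩
    refine ⟨⟨fun s => γ s ⊓ q, ?_⟩, ?_, ?_, ?_, ?_⟩
    · exact continuous_pi fun i =>
        ((continuous_apply i).comp γ.continuous).min continuous_const
    · -- stays in K
      intro s
      show γ s ⊓ q ∈ K
      by_cases hcase : γ s ≤ x₀
      · obtain ⟨u, j', hj'bin, hgu, huK⟩ := exists_cube hK (hγK s)
        apply huK
        rw [mem_cube_iff] at hgu ⊢
        intro i
        have hmin : (γ s ⊓ q) i = min (γ s i) (q i) := rfl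
        rcases le_total (γ s i) (q i) with hle | hle
        · rw [hmin, min_eq_left hle]
          exact hgu i
        · rw [hmin, min_eq_right hle]
          rw [mem_cube_iff] at hq
          constructor
          · by_cases h : c i = 0
            · have hqv : q i = (v i : ℝ) :=
                le_antisymm (hq i).2 (by have := (hq i).1; rw [hj0 i h] at this; linarith)
              have : γ s i ≤ (v i : ℝ) := le_trans (hcase i) (hxlev i)
              rw [hqv]
              calc (u i : ℝ) - j' i ≤ γ s i := (hgu i).1
                _ ≤ (v i : ℝ) := this
            · have hcgt : 0 < c i := (hc0 i).lt_of_ne (Ne.symm h)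
              have hlt : (u i : ℝ) - j' i < v i :=
                lt_of_le_of_lt (hgu i).1 (lt_of_le_of_lt (hcase i) (by rw [hx₀i i]; linarith))
              have hlt' : u i - j' i < v i := by exact_mod_cast hlt
              have hle1 : u i - j' i ≤ v i - 1 := by omega
              have hle1' : (u i : ℝ) - j' i ≤ (v i : ℝ) - 1 := by exact_mod_cast hle1
              have := (hq i).1
              rw [hj1 i h] at this
              linarith
          · exact le_trans hle (hgu i).2
      · -- `s` is past the hit time
        have hst : x₀ ≤ γ s := by
          rcases le_total s (Set.projIcc 0 1 zero_le_one t) with hcmp | hcmp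
          · exact absurd (le_trans (hγm hcmp) (le_of_eq rfl)) hcase
          · exact hγm hcmp
        have hγscube : γ s ∈ cube v j := by
          rw [mem_cube_iff]
          intro i
          refine ⟨le_trans (mem_cube_iff.mp hx₀cube i).1 (hst i), ?_⟩
          have := F_le_v hγm hγ1
          calc γ s i ≤ toR v i := by
                rw [← hγ1]; exact hγm (Set.mem_Icc.mp s.2).2 i
            _ = (v i : ℝ) := rfl
        apply hcubeK
        rw [mem_cube_iff] at hγscube hq ⊢
        intro i
        have hmin : (γ s ⊓ q) i = min (γ s i) (q i) := rfl
        rw [hmin]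
        constructor
        · exact le_min (hγscube i).1 (hq i).1
        · exact le_trans (min_le_left _ _) (hγscube i).2
    · show γ 0 ⊓ q = toR w
      rw [hγ0]
      exact inf_eq_left.mpr (hwleq q hq)
    · show γ 1 ⊓ q = q
      rw [hγ1]
      exact inf_eq_right.mpr (hqlev q hq)
    · intro s s' hss
      exact inf_le_inf_right q (hγm hss)
  -- Conclude: `Phi v γ` is in the realization of the simplex `j`.
  rw [geomReal, Set.mem_iUnion₂]
  refine ⟨j, ⟨hjbin, hjne, hcubeL⟩, ?_⟩
  rw [hPhi]
  set T : Finset (Fin n) := Finset.univ.filter (fun i => j i = 1) with hTdef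
  have hmemT : ∀ i, i ∈ T ↔ c i ≠ 0 := by
    intro i
    simp only [hTdef, Finset.mem_filter, Finset.mem_univ, true_and]
    constructor
    · intro h hc
      rw [hjdef] at h
      simp [hc] at h
    · intro h
      simp [hjdef, h]
  have hTsum : ∑ i ∈ T, c i = 1 := by
    rw [← hcsum]
    apply Finset.sum_subset (Finset.subset_univ T)
    intro i _ hiT
    by_contra hne
    exact hiT ((hmemT i).mpr hne)
  have hz : ∀ i ∈ T, (fun i => toR v - Pi.single i (1:ℝ)) i ∈
      (fun i => toR v - Pi.single i (1 : ℝ)) '' {i | j i = 1} := by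
    intro i hi
    apply Set.mem_image_of_mem
    simp only [hTdef, Finset.mem_filter] at hi
    exact hi.2
  have hcm := Finset.centerMass_mem_convexHull T (w := c) (fun i _ => hc0 i)
    (by rw [hTsum]; norm_num) hz
  have heq : T.centerMass c (fun i => toR v - Pi.single i (1:ℝ)) = x₀ := by
    rw [Finset.centerMass_eq_of_sum_1 _ _ hTsum]
    funext k
    rw [Finset.sum_apply]
    simp only [Pi.smul_apply, Pi.sub_apply, Pi.single_apply, smul_eq_mul, mul_sub,
      mul_ite, mul_one, mul_zero]
    rw [Finset.sum_sub_distrib, ← Finset.sum_mul, hTsum, one_mul, Finset.sum_ite_eq T k c]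
    have htoR : toR v k = (v k : ℝ) := rfl
    by_cases hk : k ∈ T
    · simp only [hk, if_true, htoR]
      rw [hx₀i k]
    · simp only [hk, if_false, htoR]
      have hck : c k = 0 := by
        by_contra hne
        exact hk ((hmemT k).mpr hne)
      rw [hx₀i k, hck]
  rw [← heq]
  exact hcm

lemma F_dist_le (γ γ' : C(unitInterval, Fin n → ℝ)) (r : ℝ) :
    dist (F γ' r) (F γ r) ≤ dist γ' γ :=
  ContinuousMap.dist_apply_le_dist _

lemma sfun_dist_le (v : Fin n → ℤ) (γ γ' : C(unitInterval, Fin n → ℝ)) (r : ℝ) :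
    |sfun v γ' r - sfun v γ r| ≤ n * dist γ' γ := by
  have h1 : sfun v γ' r - sfun v γ r = ∑ i, (F γ r i - F γ' r i) := by
    rw [sfun, sfun, ← Finset.sum_sub_distrib]
    congr 1; funext i; ring
  rw [h1]
  calc |∑ i, (F γ r i - F γ' r i)| ≤ ∑ i, |F γ r i - F γ' r i| :=
        Finset.abs_sum_le_sum_abs _ _
    _ ≤ ∑ _i : Fin n, dist γ' γ := by
        apply Finset.sum_le_sum
        intro i _
        rw [← Real.dist_eq]
        calc dist (F γ r i) (F γ' r i) ≤ dist (F γ r) (F γ' r) := dist_le_pi_dist _ _ i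
          _ ≤ dist γ' γ := by rw [dist_comm (F γ r)]; exact F_dist_le γ γ' r
    _ = n * dist γ' γ := by
        rw [Finset.sum_const, Finset.card_univ, Fintype.card_fin, nsmul_eq_mul]

lemma phi_continuousOn {K : Set (Fin n → ℝ)} {w v : Fin n → ℤ}
    (hs0 : 1 ≤ ∑ i, ((v i : ℝ) - (w i : ℝ))) :
    ContinuousOn (Phi v) (DipathSpace K (toR w) (toR v)) := by
  rw [Metric.continuousOn_iff]
  intro γ hγ ε hε
  obtain ⟨hγK, hγ0, hγ1, hγm⟩ := hγ
  have hsγ0 : sfun v γ 0 = ∑ i, ((v i : ℝ) - (w i : ℝ)) := sfun_zero hγ0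
  have hs1 : sfun v γ 1 = 0 := sfun_one hγ1
  set A : Set ℝ := Set.Icc (0:ℝ) 1 ∩ {r | sfun v γ r = 1} with hAdef
  have hAne : A.Nonempty := by
    have h := intermediate_value_Icc' zero_le_one (sfun_continuous (v := v) (γ := γ)).continuousOn
    have h1mem : (1:ℝ) ∈ Set.Icc (sfun v γ 1) (sfun v γ 0) := by
      constructor
      · rw [hs1]; norm_num
      · rw [hsγ0]; exact hs0
    obtain ⟨r, hr, hrs⟩ := h h1mem
    exact ⟨r, hr, hrs⟩
  have hAcp : IsCompact A := isCompact_Icc.inter_right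
    (isClosed_eq sfun_continuous continuous_const)
  set b := sSup A with hbdef
  set a := sInf A with hadef
  have hbA : b ∈ A := hAcp.sSup_mem hAne
  have haA : a ∈ A := hAcp.sInf_mem hAne
  have hbAs : sfun v γ b = 1 := hbA.2
  have haAs : sfun v γ a = 1 := haA.2
  have haleb : a ≤ b := csInf_le_csSup hAne hAcp.bddBelow hAcp.bddAbove
  set x₀ := F γ b with hx₀def
  have hPhiγ : Phi v γ = x₀ := Phi_eq hγm hbA.1 hbAs
  have hFa : F γ a = x₀ := F_eq_of_sfun_eq hγm haleb (haAs.trans hbAs.symm)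
  have hb1 : b < 1 := by
    rcases lt_or_eq_of_le hbA.1.2 with h | h
    · exact h
    · exfalso
      have h' := hbAs
      rw [h, hs1] at h'
      norm_num at h'
  obtain ⟨ηa, hηa0, hηa⟩ := Metric.continuous_iff.mp (F_continuous γ) a (ε/3) (by linarith)
  obtain ⟨ηb, hηb0, hηb⟩ := Metric.continuous_iff.mp (F_continuous γ) b (ε/3) (by linarith)
  set η := min ηa ηb with hηdef
  have hη0 : 0 < η := lt_min hηa0 hηb0
  set t₀ := max 0 (a - η/2) with ht₀def
  set t₁ := min 1 (b + η/2) with ht₁def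
  have ht₀0 : 0 ≤ t₀ := le_max_left _ _
  have ht₀a : t₀ ≤ a := max_le haA.1.1 (by linarith)
  have hbt₁ : b < t₁ := lt_min hb1 (by linarith)
  have ht₁1 : t₁ ≤ 1 := min_le_left _ _
  have ht₀t₁ : t₀ ≤ t₁ := le_trans ht₀a (le_trans haleb hbt₁.le)
  have hdt₀ : dist t₀ a < η := by
    rw [Real.dist_eq, abs_lt]
    constructor
    · have : a - η/2 ≤ t₀ := le_max_right _ _
      linarith
    · linarith
  have hdt₁ : dist t₁ b < η := by
    rw [Real.dist_eq, abs_lt]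
    constructor
    · linarith
    · have : t₁ ≤ b + η/2 := min_le_right _ _
      linarith
  have hFt₀ : dist (F γ t₀) x₀ < ε/3 := by
    rw [← hFa]
    exact hηa t₀ (lt_of_lt_of_le hdt₀ (min_le_left _ _))
  have hFt₁ : dist (F γ t₁) x₀ < ε/3 :=
    hηb t₁ (lt_of_lt_of_le hdt₁ (min_le_right _ _))
  have hst₁ : sfun v γ t₁ < 1 := by
    have hle : sfun v γ t₁ ≤ 1 := by
      have := sfun_antitone (v := v) hγm hbt₁.le
      rw [hbAs] at this
      exact this
    rcases lt_or_eq_of_le hle with h | h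
    · exact h
    · exfalso
      have ht₁A : t₁ ∈ A := ⟨⟨le_trans ht₀0 ht₀t₁, ht₁1⟩, h⟩
      have : t₁ ≤ b := le_csSup hAcp.bddAbove ht₁A
      linarith
  have hst₀ : 1 ≤ sfun v γ t₀ := by
    have := sfun_antitone (v := v) hγm ht₀a
    rw [haAs] at this
    exact this
  have hkey : t₀ ≠ 0 → 1 < sfun v γ t₀ := by
    intro h
    have ht₀lt : t₀ < a := by
      have h' : t₀ = a - η/2 := by
        rcases max_choice 0 (a - η/2) with h1 | h1
        · exact absurd h1 h
        · exact h1
      rw [h']; linarith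
    rcases lt_or_eq_of_le hst₀ with hlt | heq
    · exact hlt
    · exfalso
      have ht₀A : t₀ ∈ A := ⟨⟨ht₀0, le_trans ht₀t₁ ht₁1⟩, heq.symm⟩
      exact absurd (csInf_le hAcp.bddBelow ht₀A) (not_le.mpr ht₀lt)
  set s₁ := sfun v γ t₁ with hs₁def
  have hnpos : (0:ℝ) < n + 1 := by positivity
  have hd1pos : 0 < (1 - s₁)/(n+1) := div_pos (by linarith) hnpos
  set δ₁ := min (ε/3) ((1 - s₁)/(n+1)) with hδ₁def
  have hδ₁pos : 0 < δ₁ := lt_min (by linarith) hd1pos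
  set m := sfun v γ t₀ with hmdef
  set δ := if t₀ = 0 then δ₁ else min δ₁ ((m - 1)/(n+1)) with hδdef
  have hδpos : 0 < δ := by
    by_cases h : t₀ = 0
    · simp only [hδdef, h, if_true]; exact hδ₁pos
    · simp only [hδdef, h, if_false]
      exact lt_min hδ₁pos (div_pos (by linarith [hkey h]) hnpos)
  have hδδ₁ : δ ≤ δ₁ := by
    by_cases h : t₀ = 0
    · simp only [hδdef, h, if_true]
      exact le_rfl
    · simp only [hδdef, h, if_false]
      exact min_le_left _ _
  refine ⟨δ, hδpos, ?_⟩
  intro γ' hγ' hdist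
  obtain ⟨hγ'K, hγ'0, hγ'1, hγ'm⟩ := hγ'
  have hnd : (n:ℝ) * dist γ' γ ≤ n * δ :=
    mul_le_mul_of_nonneg_left hdist.le (by positivity)
  have h1' : sfun v γ' t₁ < 1 := by
    have habs := abs_le.mp (sfun_dist_le v γ γ' t₁)
    have hnδ₁ : (n:ℝ) * δ ≤ n * ((1 - s₁)/(n+1)) :=
      mul_le_mul_of_nonneg_left (le_trans hδδ₁ (min_le_right _ _)) (by positivity)
    have hfrac : (n:ℝ) * ((1 - s₁)/(n+1)) < 1 - s₁ := by
      rw [← mul_div_assoc, div_lt_iff₀ hnpos]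
      nlinarith
    have := habs.2
    simp only [← hs₁def] at this ⊢
    linarith
  have h0' : 1 ≤ sfun v γ' t₀ := by
    by_cases h : t₀ = 0
    · rw [h, sfun_zero hγ'0]; exact hs0
    · have hm1 : 1 < m := hkey h
      have hδm : δ ≤ (m - 1)/(n+1) := by
        simp only [hδdef, h, if_false]
        exact min_le_right _ _
      have hnδm : (n:ℝ) * δ ≤ n * ((m - 1)/(n+1)) :=
        mul_le_mul_of_nonneg_left hδm (by positivity)
      have hfrac : (n:ℝ) * ((m - 1)/(n+1)) < m - 1 := by
        rw [← mul_div_assoc, div_lt_iff₀ hnpos]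
        nlinarith
      have habs := abs_le.mp (sfun_dist_le v γ γ' t₀)
      have := habs.1
      simp only [← hmdef] at this ⊢
      linarith
  obtain ⟨r, hr, hrs⟩ : ∃ r ∈ Set.Icc t₀ t₁, sfun v γ' r = 1 :=
    intermediate_value_Icc' ht₀t₁ (sfun_continuous (v := v) (γ := γ')).continuousOn
      ⟨h1'.le, h0'⟩
  have hrIcc : r ∈ Set.Icc (0:ℝ) 1 := ⟨le_trans ht₀0 hr.1, le_trans hr.2 ht₁1⟩
  have hPhiγ' : Phi v γ' = F γ' r := Phi_eq hγ'm hrIcc hrs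
  have hmid : dist (F γ r) x₀ ≤ ε/3 := by
    rw [dist_pi_le_iff (by linarith)]
    intro i
    have h1 := F_monotone hγm hr.1 i
    have h2 := F_monotone hγm hr.2 i
    have e0 : dist (F γ t₀ i) (x₀ i) < ε/3 := lt_of_le_of_lt (dist_le_pi_dist _ _ i) hFt₀
    have e1 : dist (F γ t₁ i) (x₀ i) < ε/3 := lt_of_le_of_lt (dist_le_pi_dist _ _ i) hFt₁
    rw [Real.dist_eq] at e0 e1 ⊢
    rw [abs_le]
    rw [abs_lt] at e0 e1
    constructor
    · linarith [e0.1, h1]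
    · linarith [e1.2, h2]
  rw [hPhiγ, hPhiγ']
  have hFF : dist (F γ' r) (F γ r) ≤ dist γ' γ := F_dist_le γ γ' r
  have hδε : δ ≤ ε/3 := le_trans hδδ₁ (min_le_left _ _)
  calc dist (F γ' r) x₀ ≤ dist (F γ' r) (F γ r) + dist (F γ r) x₀ := dist_triangle _ _ _
    _ < ε := by linarith

lemma trans_monotone {X : Type*} [TopologicalSpace X] [Preorder X] {x y z : X}
    {p : Path x y} {q : Path y z}
    (hp : Monotone ⇑p) (hq : Monotone ⇑q) : Monotone ⇑(p.trans q) := by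
  intro s t hst
  have hst' : (s : ℝ) ≤ (t : ℝ) := hst
  rw [Path.trans_apply, Path.trans_apply]
  split_ifs with h1 h2 h2
  · exact hp (Subtype.mk_le_mk.mpr (by linarith))
  · calc _ ≤ p 1 := hp unitInterval.le_one'
      _ = q 0 := p.target.trans q.source.symm
      _ ≤ _ := hq unitInterval.nonneg'
  · exact absurd (le_trans hst' h2) h1
  · exact hq (Subtype.mk_le_mk.mpr (by linarith))

lemma psi_exists {K : Set (Fin n → ℝ)} {w v : Fin n → ℤ} {x : Fin n → ℝ}
    (hx : x ∈ geomReal (reach K (toR w)) v) :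
    ∃ γ ∈ DipathSpace K (toR w) (toR v), Phi v γ = x := by
  simp only [geomReal, Set.mem_iUnion] at hx
  obtain ⟨j, hj, hxj⟩ := hx
  obtain ⟨hjbin, hjne, hjL⟩ := hj
  have hT : x ∈ cube v j ∧ ∑ i, ((v i : ℝ) - x i) = 1 := by
    have hconv : convexHull ℝ ((fun i => toR v - Pi.single i (1:ℝ)) '' {i | j i = 1}) ⊆
        {p | p ∈ cube v j ∧ ∑ i, ((v i : ℝ) - p i) = 1} := by
      apply convexHull_min
      · rintro p ⟨i₀, hi₀, hpeq⟩
        have hpi : ∀ i, p i = (v i : ℝ) - (if i = i₀ then 1 else 0) := by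
          intro i
          rw [← hpeq]
          simp [toR, Pi.single_apply]
        constructor
        · rw [mem_cube_iff]
          intro i
          rw [hpi i]
          have hji₀ : j i₀ = 1 := hi₀
          rcases hjbin i with h | h
          · have hii : i ≠ i₀ := by
              intro hii
              rw [hii] at h
              rw [hji₀] at h
              exact absurd h (by norm_num)
            rw [if_neg hii, h]
            push_cast
            norm_num
          · have hji : (j i : ℝ) = 1 := by rw [h]; norm_num
            rw [hji]
            by_cases hii : i = i₀
            · rw [if_pos hii]
              exact ⟨le_rfl, by linarith⟩
            · rw [if_neg hii]
              norm_num
        · show ∑ i, ((v i : ℝ) - p i) = 1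
          have hterm : ∀ i ∈ Finset.univ, (v i : ℝ) - p i = if i = i₀ then 1 else 0 :=
            fun i _ => by rw [hpi i]; ring
          rw [Finset.sum_congr rfl hterm]
          simp
      · rintro p ⟨hp1, hp2⟩ q ⟨hq1, hq2⟩ α β hα hβ hαβ
        constructor
        · have hcc : Convex ℝ (cube v j) := convex_Icc _ _
          exact hcc hp1 hq1 hα hβ hαβ
        · have hterm : ∀ i, (v i : ℝ) - (α • p + β • q) i
              = α * ((v i : ℝ) - p i) + β * ((v i : ℝ) - q i) := by
            intro i
            simp only [Pi.add_apply, Pi.smul_apply, smul_eq_mul]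
            have hα1 : α = 1 - β := by linarith
            rw [hα1]; ring
          show ∑ i, ((v i : ℝ) - (α • p + β • q) i) = 1
          rw [Finset.sum_congr rfl (fun i _ => hterm i),
            Finset.sum_add_distrib, ← Finset.mul_sum, ← Finset.mul_sum, hp2, hq2,
            mul_one, mul_one]
          exact hαβ
    exact hconv hxj
  obtain ⟨hxcube, hxsum⟩ := hT
  have hxL : x ∈ reach K (toR w) := hjL hxcube
  obtain ⟨hxK, α, hα⟩ := hxL
  obtain ⟨hαK, hα0, hα1, hαm⟩ := hα
  have hKsub : reach K (toR w) ⊆ K := fun q hq => hq.1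
  have hxlev : ∀ i, x i ≤ (v i : ℝ) := fun i => (mem_cube_iff.mp hxcube i).2
  set σ : Path x (toR v) :=
    { toFun := fun s => fun i => x i + (s : ℝ) * ((v i : ℝ) - x i)
      continuous_toFun := by
        apply continuous_pi
        intro i
        exact continuous_const.add (continuous_subtype_val.mul continuous_const)
      source' := by funext i; simp
      target' := by funext i; simp [toR] } with hσdef
  have hσapp : ∀ (s : unitInterval) (i : Fin n), σ s i = x i + (s : ℝ) * ((v i : ℝ) - x i) :=
    fun s i => rfl
  have hσm : Monotone ⇑σ := by
    intro s s' hss i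
    rw [hσapp, hσapp]
    have h1 : (s : ℝ) ≤ (s' : ℝ) := hss
    have h0 : 0 ≤ (v i : ℝ) - x i := by linarith [hxlev i]
    nlinarith
  have hσcube : ∀ s, σ s ∈ cube v j := by
    intro s
    rw [mem_cube_iff]
    intro i
    rw [hσapp]
    have h0 : 0 ≤ (v i : ℝ) - x i := by linarith [hxlev i]
    have hs0 : 0 ≤ (s:ℝ) := s.2.1
    have hs1 : (s:ℝ) ≤ 1 := s.2.2
    have hcl : (v i : ℝ) - (j i : ℝ) ≤ x i := (mem_cube_iff.mp hxcube i).1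
    constructor
    · nlinarith
    · nlinarith
  set pα : Path (toR w) x := { toContinuousMap := α, source' := hα0, target' := hα1 }
    with hpαdef
  have hpαm : Monotone ⇑pα := hαm
  set κ := pα.trans σ with hκdef
  have hκm : Monotone ⇑κ := trans_monotone hpαm hσm
  have hκK : ∀ s, κ s ∈ K := by
    intro s
    have hs : κ s ∈ Set.range ⇑κ := Set.mem_range_self s
    rw [hκdef, Path.trans_range] at hs
    rcases hs with ⟨s', hs'⟩ | ⟨s', hs'⟩
    · rw [← hs']; exact hαK s'
    · rw [← hs']; exact hKsub (hjL (hσcube s'))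
  have hhalf : κ.toContinuousMap ⟨1/2, by norm_num⟩ = x := by
    show κ ⟨1/2, by norm_num⟩ = x
    have h2 : κ ⟨1/2, by norm_num⟩ = pα 1 := by
      rw [hκdef, Path.trans_apply]
      split_ifs with h
      · congr 1
        apply Subtype.ext
        show 2 * ((1:ℝ)/2) = ((1 : unitInterval) : ℝ)
        norm_num
      · exact absurd (by norm_num : ((⟨1/2, by norm_num⟩ : unitInterval) : ℝ) ≤ 1/2) h
    rw [h2]
    exact pα.target
  refine ⟨κ.toContinuousMap, ⟨?_, ?_, ?_, ?_⟩, ?_⟩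
  · exact fun s => hκK s
  · exact κ.source
  · exact κ.target
  · exact hκm
  · have hs2 : sfun v κ.toContinuousMap (1/2) = 1 := by
      rw [sfun, F_of_mem _ (by norm_num : (1/2:ℝ) ∈ Set.Icc (0:ℝ) 1)]
      have : κ.toContinuousMap ⟨1/2, by norm_num⟩ = x := hhalf
      rw [this]
      exact hxsum
    have hP := Phi_eq hκm (show (1/2:ℝ) ∈ Set.Icc (0:ℝ) 1 by norm_num) hs2
    rw [hP, F_of_mem _ (by norm_num : (1/2:ℝ) ∈ Set.Icc (0:ℝ) 1)]
    exact hhalf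

end Aux

theorem statement7 (n : ℕ) (hn : 0 < n) (K : Set (Fin n → ℝ)) (hK : IsComplex K)
    (w : Fin n → ℤ) (hw : toR w ∈ K)
    (v : Fin n → ℤ) (hv : toR v ∈ reach K (toR w))
    (x y : Fin n → ℝ)
    (hx : x ∈ geomReal (reach K (toR w)) v) (hy : y ∈ geomReal (reach K (toR w)) v)
    (hxy : connectedComponentIn (geomReal (reach K (toR w)) v) x ≠
           connectedComponentIn (geomReal (reach K (toR w)) v) y) :
    ∃ γ₁ ∈ DipathSpace K (toR w) (toR v), ∃ γ₂ ∈ DipathSpace K (toR w) (toR v),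
      connectedComponentIn (DipathSpace K (toR w) (toR v)) γ₁ ≠
      connectedComponentIn (DipathSpace K (toR w) (toR v)) γ₂ := by
  classical
  have hs0 : 1 ≤ ∑ i, ((v i : ℝ) - (w i : ℝ)) := by
    have hx' := hx
    simp only [geomReal, Set.mem_iUnion] at hx'
    obtain ⟨j, hj, -⟩ := hx'
    obtain ⟨hjbin, hjne, hjL⟩ := hj
    have hvj : toR (v - j) ∈ cube v j := by
      rw [mem_cube_iff]
      intro i
      have : toR (v - j) i = (v i : ℝ) - (j i : ℝ) := by
        simp [toR]
      rw [this]
      rcases hjbin i with h | h <;> rw [h] <;> norm_num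
    obtain ⟨-, β, hβ⟩ := hjL hvj
    obtain ⟨-, hβ0, hβ1, hβm⟩ := hβ
    have hwle : toR w ≤ toR (v - j) := by
      rw [← hβ0, ← hβ1]
      exact hβm (by exact Subtype.mk_le_mk.mpr zero_le_one)
    have hsum : ∑ i, ((j i : ℝ)) ≤ ∑ i, ((v i : ℝ) - (w i : ℝ)) := by
      apply Finset.sum_le_sum
      intro i _
      have h := hwle i
      have h2 : toR (v - j) i = (v i : ℝ) - (j i : ℝ) := by simp [toR]
      rw [h2] at h
      have h3 : toR w i = (w i : ℝ) := rfl
      rw [h3] at h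
      linarith
    have hone : ∃ i, j i = 1 := by
      by_contra hno
      push_neg at hno
      apply hjne
      funext i
      rcases hjbin i with h | h
      · exact h
      · exact absurd h (hno i)
    obtain ⟨i₁, hi₁⟩ := hone
    have hgeZ : (1:ℤ) ≤ ∑ i, j i := by
      have h := Finset.single_le_sum (f := j)
        (fun i _ => by rcases hjbin i with h | h <;> omega)
        (Finset.mem_univ i₁)
      omega
    have hge : (1:ℝ) ≤ ∑ i, (j i : ℝ) := by exact_mod_cast hgeZ
    linarith
  obtain ⟨γ₁, hγ₁, hΦ₁⟩ := psi_exists hx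
  obtain ⟨γ₂, hγ₂, hΦ₂⟩ := psi_exists hy
  refine ⟨γ₁, hγ₁, γ₂, hγ₂, ?_⟩
  intro heq
  apply hxy
  let S := DipathSpace K (toR w) (toR v)
  let C := connectedComponentIn S γ₁
  have hsub : C ⊆ S := connectedComponentIn_subset _ _
  have hconn : IsPreconnected C := isPreconnected_connectedComponentIn
  have hcont : ContinuousOn (Phi v) C := (phi_continuousOn (K := K) hs0).mono hsub
  have himg : IsPreconnected (Phi v '' C) := hconn.image _ hcont
  have himgsub : Phi v '' C ⊆ geomReal (reach K (toR w)) v := by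
    rintro - ⟨γ, hγ, rfl⟩
    have hγS := hsub hγ
    have hz : sfun v γ 0 = ∑ i, ((v i : ℝ) - (w i : ℝ)) := sfun_zero hγS.2.1
    exact phi_mem hK hγS (by rw [hz]; exact hs0)
  have hx1 : x ∈ Phi v '' C := ⟨γ₁, mem_connectedComponentIn hγ₁, hΦ₁⟩
  have hy1 : y ∈ Phi v '' C := by
    refine ⟨γ₂, ?_, hΦ₂⟩
    show γ₂ ∈ connectedComponentIn S γ₁
    rw [show connectedComponentIn S γ₁ = connectedComponentIn S γ₂ from heq]
    exact mem_connectedComponentIn hγ₂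
  have hsub2 := himg.subset_connectedComponentIn hx1 himgsub
  exact connectedComponentIn_eq (hsub2 hy1)

end DCC
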